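/- arXiv:2107.10665 — 2 statements merged into one kernel-verified Lean document; each statement's English description precedes it below -/
import Mathlib

section
/- The ℝ-vector space of all continuous functions Φ : [0,2π] → ℝ such that Φ(0) = 0 and Φ is differentiable with Φ′(t) = 0 at a.e. t ∈ [0,2π] is infinite-dimensional: for every n ∈ ℕ there exist n linearly independent such functions. -/
open MeasureTheory Set Real BoundedContinuousFunction
open scoped NNReal ENNReal Pointwise

noncomputable section CantorAux

/-- The closed subset of bounded continuous functions with prescribed values at 0 and 1. -/
def CS : Set (BoundedContinuousFunction ℝ ℝ) := {g | g 0 = 0 ∧ g 1 = 1}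

lemma isClosed_CS : IsClosed CS := by
  have h1 : IsClosed {g : BoundedContinuousFunction ℝ ℝ | g 0 = 0} :=
    isClosed_eq (continuous_eval_const 0) continuous_const
  have h2 : IsClosed {g : BoundedContinuousFunction ℝ ℝ | g 1 = 1} :=
    isClosed_eq (continuous_eval_const 1) continuous_const
  exact h1.inter h2

instance : CompleteSpace CS := isClosed_CS.completeSpace_coe

def wit : BoundedContinuousFunction ℝ ℝ :=
  mkOfBound ⟨fun x => max 0 (min x 1), by fun_prop⟩ 1 (by
    intro x y
    have h1 : (0:ℝ) ≤ max 0 (min x 1) := le_max_left _ _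
    have h2 : max 0 (min x 1) ≤ 1 := max_le zero_le_one (min_le_right _ _)
    have h3 : (0:ℝ) ≤ max 0 (min y 1) := le_max_left _ _
    have h4 : max 0 (min y 1) ≤ 1 := max_le zero_le_one (min_le_right _ _)
    rw [Real.dist_eq, abs_le]
    constructor <;> simp only [ContinuousMap.coe_mk] <;> linarith)

lemma wit_apply (x : ℝ) : wit x = max 0 (min x 1) := rfl

instance : Nonempty CS := ⟨⟨wit, by rw [wit_apply]; norm_num, by rw [wit_apply]; norm_num⟩⟩

/-- The Cantor-function iteration. -/
def Tfun (g : BoundedContinuousFunction ℝ ℝ) : ℝ → ℝ := fun x =>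
  if x ≤ 1/3 then g (3*x) / 2 else if x ≤ 2/3 then 1/2 else (1 + g (3*x - 2)) / 2

lemma Tfun_cont (g : CS) : Continuous (Tfun g.1) := by
  obtain ⟨g, hg0, hg1⟩ := g
  apply Continuous.if_le
  · fun_prop
  · apply Continuous.if_le
    · continuity
    · fun_prop
    · exact continuous_id
    · exact continuous_const
    · intro x hx
      rw [hx]; norm_num [hg0]
  · exact continuous_id
  · exact continuous_const
  · intro x hx
    rw [hx]
    norm_num [hg1]

lemma Tfun_bound (g : BoundedContinuousFunction ℝ ℝ) (x : ℝ) : |Tfun g x| ≤ ‖g‖ + 1 := by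
  have hb : ∀ y, |g y| ≤ ‖g‖ := fun y => g.norm_coe_le_norm y
  have hn : 0 ≤ ‖g‖ := norm_nonneg g
  unfold Tfun
  split_ifs with h1 h2
  · have h := hb (3*x)
    have he : |g (3*x) / 2| = |g (3*x)| / 2 := by rw [abs_div]; norm_num
    rw [he]; linarith
  · rw [abs_le]; constructor <;> norm_num <;> linarith
  · have h := hb (3*x-2)
    have he : |(1 + g (3*x-2)) / 2| = |1 + g (3*x-2)| / 2 := by rw [abs_div]; norm_num
    have h2 : |1 + g (3*x-2)| ≤ 1 + |g (3*x-2)| := by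
      calc |1 + g (3*x-2)| ≤ |(1:ℝ)| + |g (3*x-2)| := abs_add_le _ _
        _ = 1 + |g (3*x-2)| := by norm_num
    rw [he]; linarith

def TB (g : CS) : BoundedContinuousFunction ℝ ℝ :=
  mkOfBound ⟨Tfun g.1, Tfun_cont g⟩ (2*‖g.1‖ + 2) (by
    intro x y
    have h1 := Tfun_bound g.1 x
    have h2 := Tfun_bound g.1 y
    rw [Real.dist_eq]
    calc |Tfun g.1 x - Tfun g.1 y| ≤ |Tfun g.1 x| + |Tfun g.1 y| := abs_sub _ _
      _ ≤ 2*‖g.1‖ + 2 := by linarith)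

lemma TB_apply (g : CS) (x : ℝ) : TB g x = Tfun g.1 x := rfl

def TS (g : CS) : CS :=
  ⟨TB g, by
    constructor
    · show Tfun g.1 0 = 0
      norm_num [Tfun, g.2.1]
    · show Tfun g.1 1 = 1
      norm_num [Tfun, g.2.2]⟩

lemma TS_contracting : ContractingWith (1/2 : ℝ≥0) TS := by
  constructor
  · exact NNReal.div_lt_one_of_lt (by norm_num)
  · apply LipschitzWith.of_dist_le_mul
    intro g h
    have hd : dist (TS g) (TS h) = dist (TB g) (TB h) := rfl
    rw [hd]
    have hdd : dist g h = dist g.1 h.1 := rfl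
    rw [hdd]
    have h0 : (0:ℝ) ≤ (1/2 : ℝ≥0) * dist g.1 h.1 := by positivity
    rw [BoundedContinuousFunction.dist_le h0]
    intro x
    have key : ∀ y, dist (g.1 y) (h.1 y) ≤ dist g.1 h.1 := fun y => dist_coe_le_dist y
    show dist (Tfun g.1 x) (Tfun h.1 x) ≤ _
    unfold Tfun
    push_cast
    split_ifs with h1 h2
    · rw [Real.dist_eq]
      have := key (3*x); rw [Real.dist_eq] at this
      calc |g.1 (3*x)/2 - h.1 (3*x)/2| = |g.1 (3*x) - h.1 (3*x)|/2 := by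
            rw [div_sub_div_same, abs_div]; norm_num
        _ ≤ 1/2 * dist g.1 h.1 := by linarith
    · simp
    · rw [Real.dist_eq]
      have := key (3*x-2); rw [Real.dist_eq] at this
      calc |(1 + g.1 (3*x-2))/2 - (1 + h.1 (3*x-2))/2| = |g.1 (3*x-2) - h.1 (3*x-2)|/2 := by
            rw [div_sub_div_same, abs_div]
            norm_num
        _ ≤ 1/2 * dist g.1 h.1 := by linarith

/-- The Cantor function (as a bounded continuous function on `ℝ`). -/
def CF : BoundedContinuousFunction ℝ ℝ := (ContractingWith.fixedPoint TS TS_contracting).1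

lemma CF_eq (x : ℝ) : CF x = Tfun CF x := by
  have h := TS_contracting.fixedPoint_isFixedPt
  have h2 : (TS (ContractingWith.fixedPoint TS TS_contracting)).1 = CF := congrArg Subtype.val h
  have := congrFun (congrArg DFunLike.coe h2) x
  rw [← this]; rfl

lemma CF_zero : CF 0 = 0 := (ContractingWith.fixedPoint TS TS_contracting).2.1
lemma CF_one : CF 1 = 1 := (ContractingWith.fixedPoint TS TS_contracting).2.2

lemma CF_eqL {x : ℝ} (h : x ≤ 1/3) : CF x = CF (3*x) / 2 := by
  rw [CF_eq x, Tfun, if_pos h]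

lemma CF_eqM {x : ℝ} (h1 : ¬ x ≤ 1/3) (h2 : x ≤ 2/3) : CF x = 1/2 := by
  rw [CF_eq x, Tfun, if_neg h1, if_pos h2]

lemma CF_eqR {x : ℝ} (h : 2/3 < x) : CF x = (1 + CF (3*x - 2)) / 2 := by
  rw [CF_eq x, Tfun, if_neg (by linarith), if_neg (by linarith)]

lemma CF_half : CF (1/2) = 1/2 := CF_eqM (by norm_num) (by norm_num)

lemma CF_bdd : ∀ y, |CF y| ≤ ‖CF‖ := fun y => CF.norm_coe_le_norm y

lemma CF_nonpos {x : ℝ} (hx : x ≤ 0) : CF x = 0 := by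
  have key : ∀ k : ℕ, ∀ x : ℝ, x ≤ 0 → CF x = CF (3^k * x) / 2^k := by
    intro k
    induction k with
    | zero => intro x _; norm_num
    | succ k ih =>
      intro x hx
      have h1 : CF x = CF (3*x) / 2 := CF_eqL (by linarith)
      rw [h1, ih (3*x) (by linarith)]
      rw [pow_succ, pow_succ]
      ring_nf
  have habs : ∀ k : ℕ, |CF x| ≤ ‖CF‖ / 2^k := by
    intro k
    rw [key k x hx, abs_div]
    have := CF_bdd (3^k * x)
    have h2 : |(2:ℝ)^k| = 2^k := abs_of_pos (by positivity)
    rw [h2]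
    apply div_le_div_of_nonneg_right this (by positivity) |>.trans_eq rfl
  have hlim : Filter.Tendsto (fun k : ℕ => ‖CF‖ / 2^k) Filter.atTop (nhds 0) := by
    simp_rw [div_eq_mul_inv, ← inv_pow]
    rw [show (0:ℝ) = ‖CF‖ * 0 by ring]
    exact Filter.Tendsto.const_mul _ (tendsto_pow_atTop_nhds_zero_of_lt_one (by norm_num) (by norm_num))
  have h0 : |CF x| ≤ 0 := ge_of_tendsto' hlim (fun k => habs k)
  exact abs_eq_zero.mp (le_antisymm h0 (abs_nonneg _))

lemma CF_ge_one {x : ℝ} (hx : 1 ≤ x) : CF x = 1 := by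
  have key : ∀ k : ℕ, ∀ x : ℝ, 1 ≤ x → CF x - 1 = (CF (3^k * (x-1) + 1) - 1) / 2^k := by
    intro k
    induction k with
    | zero => intro x _; norm_num
    | succ k ih =>
      intro x hx
      have h1 : CF x = (1 + CF (3*x - 2)) / 2 := CF_eqR (by linarith)
      have h3 := ih (3*x-2) (by linarith)
      rw [show (3:ℝ)^k * (3*x - 2 - 1) + 1 = 3^(k+1) * (x - 1) + 1 by rw [pow_succ]; ring] at h3
      rw [h1]
      have hp : (2:ℝ)^k ≠ 0 := by positivity
      linear_combination h3 / 2
  have habs : ∀ k : ℕ, |CF x - 1| ≤ (‖CF‖ + 1) / 2^k := by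
    intro k
    rw [key k x hx, abs_div]
    have h2 : |(2:ℝ)^k| = 2^k := abs_of_pos (by positivity)
    rw [h2]
    apply div_le_div_of_nonneg_right _ (by positivity)
    calc |CF (3^k * (x-1) + 1) - 1| ≤ |CF (3^k * (x-1) + 1)| + |(1:ℝ)| := abs_sub _ _
      _ ≤ ‖CF‖ + 1 := by have := CF_bdd (3^k * (x-1) + 1); rw [abs_one]; linarith
  have hlim : Filter.Tendsto (fun k : ℕ => (‖CF‖+1) / 2^k) Filter.atTop (nhds 0) := by
    simp_rw [div_eq_mul_inv, ← inv_pow]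
    rw [show (0:ℝ) = (‖CF‖+1) * 0 by ring]
    exact Filter.Tendsto.const_mul _ (tendsto_pow_atTop_nhds_zero_of_lt_one (by norm_num) (by norm_num))
  have h0 : |CF x - 1| ≤ 0 := ge_of_tendsto' hlim (fun k => habs k)
  have := abs_nonneg (CF x - 1)
  have : |CF x - 1| = 0 := le_antisymm h0 this
  have := abs_eq_zero.mp this
  linarith

/-- Locally-constant points of the Cantor function. -/
def IsGood (t : ℝ) : Prop := ∃ ε > 0, ∀ u : ℝ, |u - t| < ε → CF u = CF t

lemma good_hasDerivAt {t : ℝ} (h : IsGood t) : HasDerivAt (⇑CF) 0 t := by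
  obtain ⟨ε, hε, hconst⟩ := h
  have hev : ∀ᶠ u in nhds t, CF u = (fun _ => CF t) u :=
    Metric.eventually_nhds_iff.mpr ⟨ε, hε, fun {u} hu => hconst u (by rwa [Real.dist_eq] at hu)⟩
  exact (hasDerivAt_const t (CF t)).congr_of_eventuallyEq hev

lemma good_neg {t : ℝ} (h : t < 0) : IsGood t := by
  refine ⟨-t, by linarith, fun u hu => ?_⟩
  rw [abs_lt] at hu
  rw [CF_nonpos (by linarith : u ≤ 0), CF_nonpos h.le]

lemma good_gt_one {t : ℝ} (h : 1 < t) : IsGood t := by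
  refine ⟨t - 1, by linarith, fun u hu => ?_⟩
  rw [abs_lt] at hu
  rw [CF_ge_one (by linarith : (1:ℝ) ≤ u), CF_ge_one h.le]

lemma good_mid {t : ℝ} (h1 : 1/3 < t) (h2 : t < 2/3) : IsGood t := by
  refine ⟨min (t - 1/3) (2/3 - t), by simp; constructor <;> linarith, fun u hu => ?_⟩
  rw [abs_lt] at hu
  have hu1 := hu.1
  have hu2 := hu.2
  have hm1 : min (t - 1/3) (2/3 - t) ≤ t - 1/3 := min_le_left _ _
  have hm2 : min (t - 1/3) (2/3 - t) ≤ 2/3 - t := min_le_right _ _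
  rw [CF_eqM (by linarith) (by linarith), CF_eqM (by linarith) (by linarith)]

lemma good_scaleL {t : ℝ} (ht : t < 1/3) (h : IsGood (3*t)) : IsGood t := by
  obtain ⟨ε, hε, hconst⟩ := h
  refine ⟨min (ε/3) (1/3 - t), by simp; constructor <;> linarith, fun u hu => ?_⟩
  rw [abs_lt] at hu
  have hm1 : min (ε/3) (1/3 - t) ≤ ε/3 := min_le_left _ _
  have hm2 : min (ε/3) (1/3 - t) ≤ 1/3 - t := min_le_right _ _
  have hu3 : |3*u - 3*t| < ε := by rw [abs_lt]; constructor <;> linarith [hu.1, hu.2]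
  rw [CF_eqL (by linarith [hu.1, hu.2] : u ≤ 1/3), CF_eqL ht.le, hconst (3*u) hu3]

lemma good_scaleR {t : ℝ} (ht : 2/3 < t) (h : IsGood (3*t - 2)) : IsGood t := by
  obtain ⟨ε, hε, hconst⟩ := h
  refine ⟨min (ε/3) (t - 2/3), by simp; constructor <;> linarith, fun u hu => ?_⟩
  rw [abs_lt] at hu
  have hm1 : min (ε/3) (t - 2/3) ≤ ε/3 := min_le_left _ _
  have hm2 : min (ε/3) (t - 2/3) ≤ t - 2/3 := min_le_right _ _
  have hu3 : |(3*u - 2) - (3*t - 2)| < ε := by rw [abs_lt]; constructor <;> linarith [hu.1, hu.2]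
  rw [CF_eqR (by linarith [hu.1, hu.2] : 2/3 < u), CF_eqR ht, hconst (3*u - 2) hu3]

/-- The set of bad points (the Cantor set). -/
def BadSet : Set ℝ := {t | ¬ IsGood t}

lemma badSet_subset : BadSet ⊆ Icc (0:ℝ) 1 := by
  intro t ht
  by_contra hmem
  rw [mem_Icc] at hmem
  push_neg at hmem
  rcases lt_or_ge t 0 with h | h
  · exact ht (good_neg h)
  · exact ht (good_gt_one (hmem h))

lemma badSet_cover : BadSet ⊆ {(1/3 : ℝ)} ∪ {(2/3 : ℝ)} ∪
    ((fun x => (1/3:ℝ)*x) '' BadSet) ∪ ((fun x => (1/3:ℝ)*x + 2/3) '' BadSet) := by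
  intro t ht
  rcases lt_trichotomy t (1/3) with h | h | h
  · have h3 : 3*t ∈ BadSet := fun hg => ht (good_scaleL h hg)
    exact Or.inl (Or.inr ⟨3*t, h3, by ring⟩)
  · exact Or.inl (Or.inl (Or.inl (by simp [h])))
  · rcases lt_trichotomy t (2/3) with h2 | h2 | h2
    · exact absurd (good_mid h h2) ht
    · exact Or.inl (Or.inl (Or.inr (by simp [h2])))
    · have h3 : 3*t - 2 ∈ BadSet := fun hg => ht (good_scaleR h2 hg)
      exact Or.inr ⟨3*t - 2, h3, by ring⟩

lemma vol_image_affine (a b : ℝ) (S : Set ℝ) :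
    volume ((fun x => a*x + b) '' S) = ENNReal.ofReal |a| * volume S := by
  have h1 : (fun x => a*x + b) '' S = b +ᵥ a • S := by
    ext y
    constructor
    · rintro ⟨x, hx, rfl⟩
      exact ⟨a • x, ⟨x, hx, rfl⟩, by simp [smul_eq_mul]; ring⟩
    · rintro ⟨z, ⟨x, hx, rfl⟩, rfl⟩
      exact ⟨x, hx, by simp [smul_eq_mul]; ring⟩
  rw [h1, measure_vadd, Measure.addHaar_smul]
  congr 1
  rw [Module.finrank_self, pow_one]

lemma badSet_volume : volume BadSet = 0 := by
  set m := volume BadSet with hm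
  have hfin : m ≤ 1 := by
    calc m ≤ volume (Icc (0:ℝ) 1) := measure_mono badSet_subset
      _ = 1 := by rw [Real.volume_Icc]; norm_num
  have hb : m ≤ ENNReal.ofReal (1/3) * m + ENNReal.ofReal (1/3) * m := by
    calc m ≤ volume ({(1/3 : ℝ)} ∪ {(2/3 : ℝ)} ∪
        ((fun x => (1/3:ℝ)*x) '' BadSet) ∪ ((fun x => (1/3:ℝ)*x + 2/3) '' BadSet)) :=
          measure_mono badSet_cover
      _ ≤ volume ({(1/3 : ℝ)} ∪ {(2/3 : ℝ)} ∪ ((fun x => (1/3:ℝ)*x) '' BadSet))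
            + volume ((fun x => (1/3:ℝ)*x + 2/3) '' BadSet) := measure_union_le _ _
      _ ≤ (volume ({(1/3 : ℝ)} ∪ {(2/3 : ℝ)}) + volume ((fun x => (1/3:ℝ)*x) '' BadSet))
            + volume ((fun x => (1/3:ℝ)*x + 2/3) '' BadSet) := by
          gcongr
          exact measure_union_le _ _
      _ = ENNReal.ofReal (1/3) * m + ENNReal.ofReal (1/3) * m := by
          have e0 : volume ({(1/3 : ℝ)} ∪ {(2/3 : ℝ)}) = 0 := by
            apply measure_union_null <;> exact Real.volume_singleton
          have e1 : volume ((fun x => (1/3:ℝ)*x) '' BadSet) = ENNReal.ofReal (1/3) * m := by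
            have h := vol_image_affine (1/3) 0 BadSet
            simp only [add_zero] at h
            rw [h, abs_of_nonneg (by norm_num : (0:ℝ) ≤ 1/3), ← hm]
          have e2 : volume ((fun x => (1/3:ℝ)*x + 2/3) '' BadSet)
              = ENNReal.ofReal (1/3) * m := by
            rw [vol_image_affine (1/3) (2/3) BadSet,
              abs_of_nonneg (by norm_num : (0:ℝ) ≤ 1/3), ← hm]
          rw [e0, e1, e2, zero_add]
  have hne : m ≠ ⊤ := (hfin.trans_lt (by norm_num)).ne
  by_contra h0
  have hpos : 0 < m.toReal := ENNReal.toReal_pos h0 hne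
  have h1' : ENNReal.ofReal (1/3) * m ≠ ⊤ := ENNReal.mul_ne_top ENNReal.ofReal_ne_top hne
  have hR := ENNReal.toReal_mono (ENNReal.add_ne_top.mpr ⟨h1', h1'⟩) hb
  rw [ENNReal.toReal_add h1' h1', ENNReal.toReal_mul,
    ENNReal.toReal_ofReal (by norm_num : (0:ℝ) ≤ 1/3)] at hR
  linarith

/-- The space of continuous functions `Φ : [0,2π] → ℝ` with `Φ(0) = 0` which
are differentiable with derivative `0` at a.e. point of `[0,2π]` is infinite dimensional:
for every `n` there are `n` linearly independent such functions. -/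
theorem singular_functions_infinite_dimension (n : ℕ) :
    ∃ f : Fin n → ℝ → ℝ,
      (∀ i, ContinuousOn (f i) (Set.Icc 0 (2*π)) ∧
        f i 0 = 0 ∧
        (∀ᵐ t ∂(volume.restrict (Set.Icc (0:ℝ) (2*π))), HasDerivAt (f i) 0 t)) ∧
      LinearIndependent ℝ (fun i => (Set.Icc (0:ℝ) (2*π)).restrict (f i)) := by
  rcases Nat.eq_zero_or_pos n with rfl | hn
  · exact ⟨fun i => 0, fun i => i.elim0, linearIndependent_empty_type⟩
  have hπ := Real.pi_pos
  have hn' : (0:ℝ) < n := by exact_mod_cast hn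
  refine ⟨fun i t => CF ((n:ℝ) * t / (2*π) - (i:ℕ)), fun i => ⟨?_, ?_, ?_⟩, ?_⟩
  · exact (CF.continuous.comp (by fun_prop)).continuousOn
  · show CF ((n:ℝ) * 0 / (2*π) - (i:ℕ)) = 0
    have he : (n:ℝ) * 0 / (2*π) - (i:ℕ) = -((i:ℕ):ℝ) := by ring
    rw [he]
    exact CF_nonpos (neg_nonpos.mpr (Nat.cast_nonneg _))
  · -- a.e. derivative zero
    have hA : volume ((fun t : ℝ => (n:ℝ) * t / (2*π) - (i:ℕ)) ⁻¹' BadSet) = 0 := by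
      have himg : (fun t : ℝ => (n:ℝ) * t / (2*π) - (i:ℕ)) ⁻¹' BadSet
          = (fun x => (2*π/(n:ℝ)) * x + (2*π*((i:ℕ):ℝ)/(n:ℝ))) '' BadSet := by
        ext t
        simp only [mem_preimage, mem_image]
        constructor
        · intro h
          refine ⟨(n:ℝ)*t/(2*π) - (i:ℕ), h, ?_⟩
          field_simp
          ring
        · rintro ⟨s, hs, rfl⟩
          have he : (n:ℝ) * ((2*π/(n:ℝ))*s + 2*π*((i:ℕ):ℝ)/(n:ℝ)) / (2*π) - (i:ℕ) = s := by
            field_simp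
            ring
          rwa [he]
      rw [himg, vol_image_affine, badSet_volume, mul_zero]
    have h1 : ∀ᵐ t ∂(volume : Measure ℝ), (n:ℝ)*t/(2*π) - (i:ℕ) ∉ BadSet := by
      rw [MeasureTheory.ae_iff]
      simp only [not_not]
      exact hA
    have h2 := MeasureTheory.ae_restrict_of_ae (s := Set.Icc (0:ℝ) (2*π)) h1
    filter_upwards [h2] with t ht
    have hg : IsGood ((n:ℝ)*t/(2*π) - (i:ℕ)) := not_not.mp ht
    obtain ⟨ε, hε, hconst⟩ := hg
    have hev : ∀ᶠ u in nhds t,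
        CF ((n:ℝ)*u/(2*π) - (i:ℕ)) = (fun _ => CF ((n:ℝ)*t/(2*π) - (i:ℕ))) u := by
      apply Metric.eventually_nhds_iff.mpr
      refine ⟨ε * (2*π) / n, by positivity, fun {u} hu => ?_⟩
      apply hconst
      have he : (n:ℝ)*u/(2*π) - (i:ℕ) - ((n:ℝ)*t/(2*π) - (i:ℕ)) = ((n:ℝ)/(2*π)) * (u - t) := by
        field_simp
        ring
      rw [he, abs_mul, abs_of_pos (by positivity : (0:ℝ) < (n:ℝ)/(2*π))]
      rw [Real.dist_eq] at hu
      calc (n:ℝ)/(2*π) * |u - t| < (n:ℝ)/(2*π) * (ε*(2*π)/n) :=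
            mul_lt_mul_of_pos_left hu (by positivity)
        _ = ε := by field_simp
    exact (hasDerivAt_const t _).congr_of_eventuallyEq hev
  · -- linear independence
    rw [Fintype.linearIndependent_iff]
    intro c hc
    have harg : ∀ i j : Fin n, (n:ℝ) * (2*π*(((j:ℕ):ℝ)+1/2)/n) / (2*π) - (i:ℕ)
        = ((j:ℕ):ℝ) + 1/2 - ((i:ℕ):ℝ) := by
      intro i j
      field_simp
    have hM : ∀ i j : Fin n, CF (((j:ℕ):ℝ) + 1/2 - ((i:ℕ):ℝ))
        = if (i:ℕ) < (j:ℕ) then 1 else if i = j then 1/2 else 0 := by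
      intro i j
      rcases lt_trichotomy (i:ℕ) (j:ℕ) with h | h | h
      · rw [if_pos h]
        apply CF_ge_one
        have : ((i:ℕ):ℝ) + 1 ≤ ((j:ℕ):ℝ) := by exact_mod_cast h
        linarith
      · rw [if_neg (by omega), if_pos (Fin.ext h)]
        have he : ((j:ℕ):ℝ) + 1/2 - ((i:ℕ):ℝ) = 1/2 := by rw [h]; ring
        rw [he]
        exact CF_half
      · rw [if_neg (by omega), if_neg (fun hij => by simp [hij] at h)]
        apply CF_nonpos
        have : ((j:ℕ):ℝ) + 1 ≤ ((i:ℕ):ℝ) := by exact_mod_cast h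
        linarith
    have main : ∀ m : ℕ, ∀ j : Fin n, (j:ℕ) = m → c j = 0 := by
      intro m
      induction m using Nat.strong_induction_on with
      | _ m ih =>
        intro j hj
        have hmem : 2*π*(((j:ℕ):ℝ)+1/2)/n ∈ Set.Icc (0:ℝ) (2*π) := by
          constructor
          · positivity
          · rw [div_le_iff₀ hn']
            have : ((j:ℕ):ℝ) + 1 ≤ (n:ℝ) := by exact_mod_cast j.isLt
            nlinarith
        have heval := congrFun hc ⟨_, hmem⟩
        simp only [Finset.sum_apply, Pi.smul_apply, Set.restrict_apply, Set.restrict, smul_eq_mul,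
          Pi.zero_apply] at heval
        have hterm : ∀ i : Fin n, i ∈ Finset.univ → i ≠ j →
            c i * CF ((n:ℝ) * (2*π*(((j:ℕ):ℝ)+1/2)/n) / (2*π) - (i:ℕ)) = 0 := by
          intro i _ hij
          have hne : (i:ℕ) ≠ (j:ℕ) := fun h => hij (Fin.ext h)
          rcases lt_or_gt_of_ne hne with h | h
          · have : c i = 0 := ih (i:ℕ) (by omega) i rfl
            rw [this, zero_mul]
          · rw [harg i j, hM i j, if_neg (by omega), if_neg hij, mul_zero]
        rw [Finset.sum_eq_single_of_mem j (Finset.mem_univ j) hterm] at heval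
        rw [harg j j, hM j j, if_neg (lt_irrefl _), if_pos rfl] at heval
        rcases mul_eq_zero.mp heval with h | h
        · exact h
        · norm_num at h
    exact fun j => main (j:ℕ) j rfl

end CantorAux
end

section
/- Let U : 𝔻 → ℝ be continuously differentiable, let ζ ∈ ∂𝔻, and let ν ∈ ℂ with |ν| = 1 satisfy Re( n(ζ) · conj(ν) ) > 0, where n(ζ) := −ζ is the unit inner normal to ∂𝔻 at ζ. Suppose the function z ↦ ∂U/∂ν(z) has finite angular limit L at ζ. Then ζ + t·ν ∈ 𝔻 for all sufficiently small t > 0, the finite limit U(ζ) := lim_{t→0⁺} U(ζ + t·ν) exists, and lim_{t→0⁺} (U(ζ + t·ν) − U(ζ))/t = L. -/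
open MeasureTheory Metric Set Filter

noncomputable section

/-- The nontangential approach region in `D` at the boundary point `ω` with opening `c`. -/
def NTRegion (D : Set ℂ) (ω : ℂ) (c : ℝ) : Set ℂ :=
  {z ∈ D | ‖z - ω‖ ≤ c * Metric.infDist z (frontier D)}

/-- `v` has angular (nontangential) limit `L` at the boundary point `ω` of `D`. -/
def HasAngularLimit {E : Type*} [TopologicalSpace E]
    (D : Set ℂ) (v : ℂ → E) (ω : ℂ) (L : E) : Prop :=
  ∀ c : ℝ, 1 < c → Filter.Tendsto v (nhdsWithin ω (NTRegion D ω c)) (nhds L)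

/-- If `U` is `C¹` on `𝔻`, `ζ ∈ ∂𝔻`, `ν` is a unit vector with positive
projection on the inner normal `n(ζ) = −ζ`, and `∂U/∂ν` has finite angular limit `L` at `ζ`,
then `ζ + tν ∈ 𝔻` for small `t > 0`, the boundary value `U(ζ)` along direction `ν` exists,
and the difference quotients along `ν` converge to `L`. -/
theorem directional_derivative_boundary_limit (U : ℂ → ℝ)
    (hU : ContDiffOn ℝ 1 U (Metric.ball (0:ℂ) 1))
    (ζ ν : ℂ) (hζ : ζ ∈ Metric.sphere (0:ℂ) 1) (hν : ‖ν‖ = 1)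
    (hpos : 0 < ((-ζ) * (starRingEnd ℂ) ν).re)
    (L : ℝ)
    (hlim : HasAngularLimit (Metric.ball (0:ℂ) 1) (fun z => fderiv ℝ U z ν) ζ L) :
    (∀ᶠ t : ℝ in nhdsWithin 0 (Set.Ioi 0), ζ + (t : ℂ) * ν ∈ Metric.ball (0:ℂ) 1) ∧
    ∃ Uζ : ℝ,
      Filter.Tendsto (fun t : ℝ => U (ζ + (t : ℂ) * ν))
        (nhdsWithin 0 (Set.Ioi 0)) (nhds Uζ) ∧
      Filter.Tendsto (fun t : ℝ => (U (ζ + (t : ℂ) * ν) - Uζ) / t)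
        (nhdsWithin 0 (Set.Ioi 0)) (nhds L) := by
  set a : ℝ := ((-ζ) * (starRingEnd ℂ) ν).re with ha_def
  have ha : 0 < a := hpos
  have hζ1 : ‖ζ‖ = 1 := by
    simpa using mem_sphere_zero_iff_norm.mp hζ
  have ha1 : a ≤ 1 := by
    calc a ≤ ‖(-ζ) * (starRingEnd ℂ) ν‖ := Complex.re_le_norm _
    _ = 1 := by simp [map_mul, hζ1, hν]
  -- norm computation
  have hnorm : ∀ t : ℝ, ‖ζ + (t:ℂ)*ν‖^2 = 1 - 2*a*t + t^2 := by
    intro t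
    have h1 : ‖ζ + (t:ℂ)*ν‖^2 = Complex.normSq (ζ + (t:ℂ)*ν) := by
      rw [Complex.sq_norm]
    have h2 : Complex.normSq ζ = 1 := by
      rw [← Complex.sq_norm, hζ1]; norm_num
    have h3 : Complex.normSq ((t:ℂ)*ν) = t^2 := by
      rw [map_mul, Complex.normSq_ofReal, ← Complex.sq_norm, hν]; ring
    have h4 : (ζ * (starRingEnd ℂ) ((t:ℂ)*ν)).re = -(a*t) := by
      have : ζ * (starRingEnd ℂ) ((t:ℂ)*ν) = (t:ℂ) * (ζ * (starRingEnd ℂ) ν) := by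
        rw [map_mul, Complex.conj_ofReal]; ring
      rw [this, Complex.re_ofReal_mul]
      have : (ζ * (starRingEnd ℂ) ν).re = -a := by
        rw [ha_def]; simp [Complex.neg_re]
      rw [this]; ring
    rw [h1, Complex.normSq_add, h2, h3, h4]; ring
  -- membership in the ball
  have hmem : ∀ t : ℝ, 0 < t → t < a → ζ + (t:ℂ)*ν ∈ Metric.ball (0:ℂ) 1 := by
    intro t ht hta
    rw [mem_ball_zero_iff]
    have h := hnorm t
    nlinarith [norm_nonneg (ζ + (t:ℂ)*ν)]
  have hIoo : Ioo (0:ℝ) a ∈ nhdsWithin (0:ℝ) (Set.Ioi 0) :=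
    Ioo_mem_nhdsGT_of_mem ⟨le_refl _, ha⟩
  refine ⟨Filter.eventually_of_mem hIoo fun t ht => hmem t ht.1 ht.2, ?_⟩
  -- nontangential region membership
  set c : ℝ := 2/a + 2 with hc_def
  have hc : 1 < c := by
    have h2a : 0 < 2/a := by positivity
    show (1:ℝ) < 2/a + 2
    linarith
  have hNT : ∀ t : ℝ, 0 < t → t < a → ζ + (t:ℂ)*ν ∈ NTRegion (Metric.ball (0:ℂ) 1) ζ c := by
    intro t ht hta
    refine ⟨hmem t ht hta, ?_⟩
    have habs : ‖ζ + (t:ℂ)*ν - ζ‖ = t := by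
      simp [norm_mul, hν, abs_of_pos ht]
    rw [habs]
    -- norm bound : ‖ζ+tν‖ ≤ 1 - a*t/2
    have hb : ‖ζ + (t:ℂ)*ν‖ ≤ 1 - a*t/2 := by
      have h := hnorm t
      have hat1 : a*t ≤ 1 := by nlinarith
      have h2 : ‖ζ + (t:ℂ)*ν‖^2 ≤ (1 - a*t/2)^2 := by nlinarith [mul_pos ht (sub_pos.mpr hta), sq_nonneg (a*t)]
      have h3 : (0:ℝ) ≤ 1 - a*t/2 := by linarith
      nlinarith [norm_nonneg (ζ + (t:ℂ)*ν)]
    -- infDist lower bound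
    have hd : 1 - ‖ζ + (t:ℂ)*ν‖ ≤ Metric.infDist (ζ + (t:ℂ)*ν) (frontier (Metric.ball (0:ℂ) 1)) := by
      rw [frontier_ball (0:ℂ) one_ne_zero]
      by_contra hcon
      push_neg at hcon
      obtain ⟨w, hw, hwd⟩ := (Metric.infDist_lt_iff ⟨1, by simp⟩).mp hcon
      have hw1 : ‖w‖ = 1 := mem_sphere_zero_iff_norm.mp hw
      have h5 := norm_sub_norm_le w (ζ + (t:ℂ)*ν)
      rw [dist_eq_norm, norm_sub_rev] at hwd
      rw [hw1] at h5
      linarith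
    have hat : a*t/2 ≤ 1 - ‖ζ + (t:ℂ)*ν‖ := by linarith
    calc (t:ℝ) = (2/a) * (a*t/2) := by field_simp
    _ ≤ c * (a*t/2) := by
        apply mul_le_mul_of_nonneg_right _ (by positivity)
        rw [hc_def]; linarith
    _ ≤ c * Metric.infDist (ζ + (t:ℂ)*ν) (frontier (Metric.ball (0:ℂ) 1)) := by
        apply mul_le_mul_of_nonneg_left _ (le_of_lt (lt_trans one_pos hc))
        linarith
  -- path derivative
  set g : ℝ → ℝ := fun t => U (ζ + (t:ℂ)*ν) with hg_def
  set h : ℝ → ℝ := fun t => fderiv ℝ U (ζ + (t:ℂ)*ν) ν with hh_def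
  have hγ : ∀ t : ℝ, HasDerivAt (fun t : ℝ => ζ + (t:ℂ)*ν) ν t := by
    intro t
    have h1 : HasDerivAt (fun t : ℝ => (t:ℂ)) 1 t := Complex.ofRealCLM.hasDerivAt
    have h2 := (h1.mul_const ν).const_add ζ
    simpa using h2
  have hderiv : ∀ t : ℝ, 0 < t → t < a → HasDerivAt g (h t) t := by
    intro t ht hta
    have hz : ζ + (t:ℂ)*ν ∈ Metric.ball (0:ℂ) 1 := hmem t ht hta
    have hUd : DifferentiableAt ℝ U (ζ + (t:ℂ)*ν) :=
      (hU.differentiableOn one_ne_zero).differentiableAt (isOpen_ball.mem_nhds hz)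
    exact hUd.hasFDerivAt.comp_hasDerivAt t (hγ t)
  -- limit of h along the segment
  have hγlim : Filter.Tendsto (fun t : ℝ => ζ + (t:ℂ)*ν) (nhdsWithin 0 (Set.Ioi 0))
      (nhdsWithin ζ (NTRegion (Metric.ball (0:ℂ) 1) ζ c)) := by
    apply tendsto_nhdsWithin_of_tendsto_nhds_of_eventually_within
    · have : Continuous (fun t : ℝ => ζ + (t:ℂ)*ν) := by continuity
      have := this.tendsto 0
      simpa using this.mono_left nhdsWithin_le_nhds
    · exact Filter.eventually_of_mem hIoo fun t ht => hNT t ht.1 ht.2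
  have hL : Filter.Tendsto h (nhdsWithin 0 (Set.Ioi 0)) (nhds L) :=
    (hlim c hc).comp hγlim
  -- key estimate
  have key : ∀ ε : ℝ, 0 < ε → ∃ δ : ℝ, 0 < δ ∧ δ ≤ a ∧
      ∀ x ∈ Ioo (0:ℝ) δ, ∀ y ∈ Ioo (0:ℝ) δ, |g y - g x - L*(y-x)| ≤ ε * |y - x| := by
    intro ε hε
    have hev : ∀ᶠ u in nhdsWithin (0:ℝ) (Set.Ioi 0), dist (h u) L < ε :=
      (Metric.tendsto_nhds.mp hL) ε hε
    obtain ⟨δ₀, hδ₀, hsub⟩ := mem_nhdsGT_iff_exists_Ioo_subset.mp hev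
    refine ⟨min δ₀ a, lt_min hδ₀ ha, min_le_right _ _, ?_⟩
    set s := Ioo (0:ℝ) (min δ₀ a) with hs_def
    have hf' : ∀ u ∈ s, HasDerivWithinAt (fun u => g u - L*u) (h u - L) s u := by
      intro u hu
      have h1 : HasDerivAt (fun u : ℝ => L*u) L u := by
        simpa using (hasDerivAt_id u).const_mul L
      exact ((hderiv u hu.1 (lt_of_lt_of_le hu.2 (min_le_right _ _))).sub h1).hasDerivWithinAt
    have hbound : ∀ u ∈ s, ‖h u - L‖ ≤ ε := by
      intro u hu
      have := hsub ⟨hu.1, lt_of_lt_of_le hu.2 (min_le_left _ _)⟩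
      rw [Real.norm_eq_abs, ← Real.dist_eq]
      exact this.le
    intro x hx y hy
    have := Convex.norm_image_sub_le_of_norm_hasDerivWithin_le hf' hbound (convex_Ioo _ _) hx hy
    simpa [Real.norm_eq_abs, abs_sub_comm] using
      (by
        have h2 : (fun u => g u - L*u) y - (fun u => g u - L*u) x = g y - g x - L*(y-x) := by ring
        rw [h2] at this
        exact this : |g y - g x - L*(y-x)| ≤ ε * ‖y - x‖)
  -- existence of the boundary value via Lipschitz extension
  obtain ⟨δ₁, hδ₁, hδ₁a, hkey₁⟩ := key 1 one_pos
  have hlip : LipschitzOnWith (Real.toNNReal (|L|+1)) g (Ioo 0 δ₁) := by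
    apply LipschitzOnWith.of_dist_le_mul
    intro x hx y hy
    have := hkey₁ y hy x hx
    rw [Real.dist_eq, Real.dist_eq, Real.coe_toNNReal _ (by positivity)]
    calc |g x - g y| ≤ |g x - g y - L*(x-y)| + |L*(x-y)| := by
          have := abs_add_le (g x - g y - L*(x-y)) (L*(x-y)); simpa using this
    _ ≤ 1 * |x - y| + |L| * |x - y| := by
        rw [abs_mul]
        exact add_le_add this (by rfl)
    _ = (|L|+1) * |x - y| := by ring
  obtain ⟨G, hG, hEq⟩ := hlip.extend_real
  refine ⟨G 0, ?_, ?_⟩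
  · -- tendsto g to G 0
    have h1 : Filter.Tendsto G (nhdsWithin 0 (Set.Ioi 0)) (nhds (G 0)) :=
      (hG.continuous.tendsto 0).mono_left nhdsWithin_le_nhds
    apply h1.congr'
    filter_upwards [Ioo_mem_nhdsGT_of_mem ⟨le_refl (0:ℝ), hδ₁⟩] with t ht
    exact (hEq ht).symm
  · -- difference quotient limit
    have hUζ : Filter.Tendsto g (nhdsWithin 0 (Set.Ioi 0)) (nhds (G 0)) := by
      have h1 : Filter.Tendsto G (nhdsWithin 0 (Set.Ioi 0)) (nhds (G 0)) :=
        (hG.continuous.tendsto 0).mono_left nhdsWithin_le_nhds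
      apply h1.congr'
      filter_upwards [Ioo_mem_nhdsGT_of_mem ⟨le_refl (0:ℝ), hδ₁⟩] with t ht
      exact (hEq ht).symm
    rw [Metric.tendsto_nhds]
    intro ε hε
    obtain ⟨δ, hδ, hδa, hkey⟩ := key (ε/2) (by positivity)
    filter_upwards [Ioo_mem_nhdsGT_of_mem ⟨le_refl (0:ℝ), hδ⟩] with t ht
    -- show |g t - G 0 - L t| ≤ ε/2 * t
    have hbd : |g t - G 0 - L*t| ≤ ε/2 * t := by
      have htend : Filter.Tendsto (fun s : ℝ => |g t - g s - L*(t-s)|)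
          (nhdsWithin 0 (Set.Ioi 0)) (nhds |g t - G 0 - L*t|) := by
        have : Filter.Tendsto (fun s : ℝ => g t - g s - L*(t-s))
            (nhdsWithin 0 (Set.Ioi 0)) (nhds (g t - G 0 - L*(t-0))) := by
          apply Filter.Tendsto.sub (Filter.Tendsto.sub tendsto_const_nhds hUζ)
          exact (tendsto_const_nhds.sub (tendsto_nhdsWithin_of_tendsto_nhds
            Filter.tendsto_id)).const_mul L
        simpa using this.abs
      apply le_of_tendsto htend
      filter_upwards [Ioo_mem_nhdsGT_of_mem ⟨le_refl (0:ℝ), ht.1⟩] with s hs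
      obtain ⟨hs1, hs2⟩ := hs
      have h1 := hkey s ⟨hs1, lt_trans hs2 ht.2⟩ t ht
      calc |g t - g s - L*(t-s)| ≤ ε/2 * |t - s| := h1
      _ ≤ ε/2 * t := by
          apply mul_le_mul_of_nonneg_left _ (by positivity)
          rw [abs_of_pos (by linarith : (0:ℝ) < t - s)]
          linarith
    rw [Real.dist_eq]
    have ht0 : (0:ℝ) < t := ht.1
    have heq : (g t - G 0)/t - L = (g t - G 0 - L*t)/t := by field_simp
    rw [heq, abs_div, abs_of_pos ht0]
    calc |g t - G 0 - L*t| / t ≤ (ε/2 * t)/t := by gcongr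
    _ = ε/2 := by field_simp
    _ < ε := by linarith
end
end
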